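/- Every primary pseudoperfect number greater than 2 is a pseudoperfect number. -/

import Mathlib

/-- The map `f` from the paper: `f n = n - 1` if `n` is prime, and otherwise
`f n = n - d n` where `d n = n / n.minFac` is the largest divisor `d` of `n`
with `1 < d < n`. -/
def egf (n : ℕ) : ℕ := if n.Prime then n - 1 else n - n / n.minFac

/-- `F n = {n, f n, f (f n), …, 1}`: the set of iterates of `f` starting at `n`
(the iterates strictly decrease to `1`; we collect all positive iterates). -/
def Fset (n : ℕ) : Set ℕ := {m | 0 < m ∧ ∃ i : ℕ, egf^[i] n = m}

/-- The sum `∑_{p^k ∣ n} 1/p^k` over all prime power divisors `p^k` of `n`. -/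
def ppSum (n : ℕ) : ℚ := ∑ d ∈ n.divisors.filter (fun d => IsPrimePow d), (1 : ℚ) / d

/-- A prime power pseudoperfect number: `n > 1` with `∑_{p^k ∣ n} 1/p^k + 1/n = 1`. -/
def PPPseudoperfect (n : ℕ) : Prop := 1 < n ∧ ppSum n + 1 / n = 1

/-- A prime power Giuga number: a composite `n` with `∑_{p^k ∣ n} 1/p^k - 1/n` a positive integer. -/
def PPGiuga (n : ℕ) : Prop :=
  1 < n ∧ ¬ n.Prime ∧ ∃ m : ℕ, 0 < m ∧ ppSum n - 1 / n = m

/-- A primary pseudoperfect number: `n > 1` with `∑_{p ∣ n} 1/p + 1/n = 1`. -/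
def PrimaryPseudoperfect (n : ℕ) : Prop :=
  1 < n ∧ (∑ p ∈ n.primeFactors, (1 : ℚ) / p) + 1 / n = 1

/-- A Giuga number: a composite `n` with `∑_{p ∣ n} 1/p - 1/n` a positive integer. -/
def Giuga (n : ℕ) : Prop :=
  1 < n ∧ ¬ n.Prime ∧ ∃ m : ℕ, 0 < m ∧ (∑ p ∈ n.primeFactors, (1 : ℚ) / p) - 1 / n = m

/-- A pseudoperfect number: a positive integer that is the sum of a nonempty set of
distinct divisors `d` with `0 < d < n`. -/
def Pseudoperfect (n : ℕ) : Prop :=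
  0 < n ∧ ∃ s : Finset ℕ, s ⊆ n.properDivisors ∧ s.Nonempty ∧ ∑ d ∈ s, d = n

/-- every primary pseudoperfect number greater than `2` is a
pseudoperfect number. -/
theorem stmt14 (n : ℕ) (h : PrimaryPseudoperfect n) (h2 : 2 < n) :
    Pseudoperfect n := by
  obtain ⟨h1, heq⟩ := h
  have hn0 : 0 < n := by omega
  have hnQ : (n : ℚ) ≠ 0 := by positivity
  -- n is not prime
  have hnp : ¬ n.Prime := by
    intro hp
    have : n.primeFactors = {n} := by
      rw [Nat.Prime.primeFactors hp]
    rw [this, Finset.sum_singleton] at heq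
    have : (n : ℚ) = 2 := by field_simp at heq; linarith
    have : n = 2 := by exact_mod_cast this
    omega
  -- key rational identity: ∑ n/p + 1 = n
  have hkey : (∑ p ∈ n.primeFactors, ((n / p : ℕ) : ℚ)) + 1 = (n : ℚ) := by
    have : (∑ p ∈ n.primeFactors, ((n / p : ℕ) : ℚ)) =
        ∑ p ∈ n.primeFactors, (n : ℚ) * (1 / p) := by
      apply Finset.sum_congr rfl
      intro p hp
      have hpd : p ∣ n := Nat.dvd_of_mem_primeFactors hp
      have hp0 : (p : ℚ) ≠ 0 := by
        exact_mod_cast (Nat.prime_of_mem_primeFactors hp).ne_zero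
      rw [Nat.cast_div hpd hp0]
      field_simp
    rw [this, ← Finset.mul_sum]
    have : (n : ℚ) * ((∑ p ∈ n.primeFactors, (1 : ℚ) / p) + 1 / n) = n * 1 := by
      rw [heq]
    field_simp at this ⊢
    linarith
  have hnat : (∑ p ∈ n.primeFactors, n / p) + 1 = n := by
    exact_mod_cast hkey
  -- the set of divisors
  refine ⟨hn0, insert 1 (n.primeFactors.image (fun p => n / p)), ?_, ?_, ?_⟩
  · intro d hd
    rw [Finset.mem_insert] at hd
    rw [Nat.mem_properDivisors]
    rcases hd with rfl | hd
    · exact ⟨one_dvd n, by omega⟩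
    · obtain ⟨p, hp, rfl⟩ := Finset.mem_image.mp hd
      have hpp := Nat.prime_of_mem_primeFactors hp
      have hpd : p ∣ n := Nat.dvd_of_mem_primeFactors hp
      exact ⟨Nat.div_dvd_of_dvd hpd, Nat.div_lt_self hn0 hpp.one_lt⟩
  · exact ⟨1, Finset.mem_insert_self 1 _⟩
  · have h1not : (1 : ℕ) ∉ n.primeFactors.image (fun p => n / p) := by
      intro hmem
      obtain ⟨p, hp, hp1⟩ := Finset.mem_image.mp hmem
      have hpd : p ∣ n := Nat.dvd_of_mem_primeFactors hp
      have : n = p := by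
        have := Nat.div_mul_cancel hpd
        rw [hp1] at this; omega
      exact hnp (this ▸ Nat.prime_of_mem_primeFactors hp)
    rw [Finset.sum_insert h1not]
    rw [Finset.sum_image]
    · omega
    · intro p hp q hq hpq
      have hpd : p ∣ n := Nat.dvd_of_mem_primeFactors hp
      have hqd : q ∣ n := Nat.dvd_of_mem_primeFactors hq
      have h1 := Nat.div_mul_cancel hpd
      have h2 := Nat.div_mul_cancel hqd
      have hne : n / p ≠ 0 := by
        have := Nat.prime_of_mem_primeFactors hp
        intro h0; rw [h0] at h1; omega
      rw [show n / p = n / q from hpq] at h1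
      nlinarith [h1, h2]
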